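/- arXiv:1811.04514 — 7 statements merged into one kernel-verified Lean document; each statement's English description precedes it below -/
import Mathlib

section
/- Let f : ℝ \ {0} → ℝ be defined by f(x) = m if 1/(m+1)! ≤ |x| < 1/m! for m ∈ ℕ, and f(x) = 0 if |x| ≥ 1. Then for every λ > 0, the series ∑_{n=1}^∞ (1/n!) ∫_ℝ (λ f(x))^n dx converges (indeed it is bounded by e^{e^λ}). -/
open MeasureTheory ENNReal

/-- The annulus where `f = m`. -/
private def Aset (m : ℕ) : Set ℝ :=
  {x : ℝ | 1 / (Nat.factorial (m + 1) : ℝ) ≤ |x| ∧ |x| < 1 / (Nat.factorial m : ℝ)}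

private lemma Aset_measurable (m : ℕ) : MeasurableSet (Aset m) := by
  have : Aset m = (fun x : ℝ => |x|) ⁻¹' Set.Ico (1 / (Nat.factorial (m + 1) : ℝ))
      (1 / (Nat.factorial m : ℝ)) := rfl
  rw [this]
  exact (continuous_abs.measurable) measurableSet_Ico

private lemma exists_annulus {x : ℝ} (hx0 : 0 < |x|) (hx1 : |x| < 1) :
    ∃ m : ℕ, 1 / (Nat.factorial (m + 1) : ℝ) ≤ |x| ∧ |x| < 1 / (Nat.factorial m : ℝ) := by
  classical
  have hP : ∃ m : ℕ, 1 / (Nat.factorial (m + 1) : ℝ) ≤ |x| := by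
    obtain ⟨N, hN⟩ := exists_nat_gt (1 / |x|)
    refine ⟨N, ?_⟩
    have hN1 : (1 : ℝ) ≤ (Nat.factorial (N + 1) : ℝ) := by
      exact_mod_cast Nat.one_le_iff_ne_zero.mpr (Nat.factorial_ne_zero _)
    have h1 : (N : ℝ) ≤ (Nat.factorial (N + 1) : ℝ) := by
      have := (Nat.self_le_factorial N).trans (Nat.factorial_le (Nat.le_succ N))
      exact_mod_cast this
    have hNpos : (0 : ℝ) < (Nat.factorial (N + 1) : ℝ) := by positivity
    rw [div_le_iff₀ hNpos] at *
    have h2 : 1 / |x| < (Nat.factorial (N + 1) : ℝ) := hN.trans_le h1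
    rw [div_lt_iff₀ hx0] at h2
    nlinarith
  set m := Nat.find hP with hm
  refine ⟨m, Nat.find_spec hP, ?_⟩
  rcases Nat.eq_zero_or_pos m with h0 | hpos
  · rw [h0]; simpa using hx1
  · obtain ⟨k, hk⟩ := Nat.exists_eq_succ_of_ne_zero hpos.ne'
    have := Nat.find_min hP (m := k) (by omega)
    rw [hk]
    push_neg at this
    simpa using this

/-- for the unbounded step function `f` (with `f x = m` on
`1/(m+1)! ≤ |x| < 1/m!` and `f x = 0` for `|x| ≥ 1`), the series
`∑_{n≥1} λ^n/n! ∫ f^n dx` converges for every `λ > 0`. -/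
theorem stmt0 (f : ℝ → ℝ)
    (hf1 : ∀ x : ℝ, x ≠ 0 → ∀ m : ℕ,
      1 / (Nat.factorial (m + 1) : ℝ) ≤ |x| → |x| < 1 / (Nat.factorial m : ℝ) → f x = m)
    (hf2 : ∀ x : ℝ, 1 ≤ |x| → f x = 0)
    (lam : ℝ) (hlam : 0 < lam) :
    ∑' n : ℕ, ((Nat.factorial (n + 1) : ℝ≥0∞))⁻¹ *
      ∫⁻ x : ℝ, ENNReal.ofReal ((lam * f x) ^ (n + 1)) ≠ ⊤ := by
  -- constants
  set c : ℕ → ℝ≥0∞ := fun m => ENNReal.ofReal (2 / (Nat.factorial m : ℝ)) with hc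
  -- step 1 : pointwise a.e. bound on the integrand
  have hpt : ∀ n : ℕ, ∀ x : ℝ, x ≠ 0 →
      ENNReal.ofReal ((lam * f x) ^ (n + 1)) ≤
        ∑' m : ℕ, (Aset m).indicator
          (fun _ => ENNReal.ofReal ((lam * (m : ℝ)) ^ (n + 1))) x := by
    intro n x hx
    by_cases hx1 : 1 ≤ |x|
    · rw [hf2 x hx1]
      simp
    · push_neg at hx1
      have hx0 : 0 < |x| := abs_pos.mpr hx
      obtain ⟨m, hm1, hm2⟩ := exists_annulus hx0 hx1
      have hfx : f x = m := hf1 x hx m hm1 hm2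
      have hmem : x ∈ Aset m := ⟨hm1, hm2⟩
      calc ENNReal.ofReal ((lam * f x) ^ (n + 1))
          = (Aset m).indicator
            (fun _ => ENNReal.ofReal ((lam * (m : ℝ)) ^ (n + 1))) x := by
            rw [Set.indicator_of_mem hmem, hfx]
        _ ≤ _ := ENNReal.le_tsum m
  -- step 2 : bound on each integral
  have hint : ∀ n : ℕ, (∫⁻ x : ℝ, ENNReal.ofReal ((lam * f x) ^ (n + 1))) ≤
      ∑' m : ℕ, ENNReal.ofReal ((lam * (m : ℝ)) ^ (n + 1)) * c m := by
    intro n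
    have hae : ∀ᵐ x : ℝ, ENNReal.ofReal ((lam * f x) ^ (n + 1)) ≤
        ∑' m : ℕ, (Aset m).indicator
          (fun _ => ENNReal.ofReal ((lam * (m : ℝ)) ^ (n + 1))) x := by
      filter_upwards [compl_mem_ae_iff.mpr (Real.volume_singleton (a := (0 : ℝ)))] with x hx
      exact hpt n x hx
    refine (lintegral_mono_ae hae).trans ?_
    rw [lintegral_tsum (fun m => ((measurable_const.indicator (Aset_measurable m)).aemeasurable))]
    refine ENNReal.tsum_le_tsum fun m => ?_
    rw [lintegral_indicator (Aset_measurable m), setLIntegral_const]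
    refine mul_le_mul_right ?_ _
    have hsub : Aset m ⊆ Set.Ioo (-(1 / (Nat.factorial m : ℝ))) (1 / (Nat.factorial m : ℝ)) := by
      intro y hy
      rcases hy with ⟨_, h2⟩
      exact abs_lt.mp h2
    calc volume (Aset m) ≤ volume (Set.Ioo (-(1 / (Nat.factorial m : ℝ)))
          (1 / (Nat.factorial m : ℝ))) := measure_mono hsub
      _ = ENNReal.ofReal (2 / (Nat.factorial m : ℝ)) := by
          rw [Real.volume_Ioo]; ring_nf
      _ = c m := rfl
  -- step 3 : sum the bounds
  have hexp : ∀ m : ℕ, Real.exp (lam * m) = ∑' k : ℕ, (lam * m) ^ k / (Nat.factorial k : ℝ) := by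
    intro m
    rw [Real.exp_eq_exp_ℝ, NormedSpace.exp_eq_tsum_div]
  have hsummand : ∀ m : ℕ, (∑' n : ℕ, ((Nat.factorial (n + 1) : ℝ≥0∞))⁻¹ *
      ENNReal.ofReal ((lam * (m : ℝ)) ^ (n + 1))) ≤ ENNReal.ofReal (Real.exp (lam * m)) := by
    intro m
    have hnn : 0 ≤ lam * (m : ℝ) := by positivity
    have hsm : Summable (fun k : ℕ => (lam * m) ^ k / (Nat.factorial k : ℝ)) :=
      Real.summable_pow_div_factorial _
    have key : ∀ n : ℕ, ((Nat.factorial (n + 1) : ℝ≥0∞))⁻¹ *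
        ENNReal.ofReal ((lam * (m : ℝ)) ^ (n + 1)) =
        ENNReal.ofReal ((lam * m) ^ (n + 1) / (Nat.factorial (n + 1) : ℝ)) := by
      intro n
      rw [div_eq_mul_inv, ENNReal.ofReal_mul (by positivity), mul_comm]
      congr 1
      rw [ENNReal.ofReal_inv_of_pos (by positivity), ENNReal.ofReal_natCast]
    simp_rw [key]
    rw [← ENNReal.ofReal_tsum_of_nonneg (fun n => by positivity)
      ((summable_nat_add_iff 1).mpr hsm)]
    refine ENNReal.ofReal_le_ofReal ?_
    rw [hexp m, Summable.tsum_eq_zero_add hsm]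
    have h0 : (0:ℝ) ≤ (lam * m) ^ 0 / (Nat.factorial 0 : ℝ) := by positivity
    linarith [h0]
  have hbig : Summable (fun m : ℕ => Real.exp (lam * m) * (2 / (Nat.factorial m : ℝ))) := by
    have : (fun m : ℕ => Real.exp (lam * m) * (2 / (Nat.factorial m : ℝ))) =
        fun m : ℕ => 2 * ((Real.exp lam) ^ m / (Nat.factorial m : ℝ)) := by
      funext m
      rw [← Real.exp_nat_mul, mul_comm (m : ℝ) lam]
      ring
    rw [this]
    exact (Real.summable_pow_div_factorial (Real.exp lam)).mul_left 2
  -- assemble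
  have hchain : (∑' n : ℕ, ((Nat.factorial (n + 1) : ℝ≥0∞))⁻¹ *
      ∫⁻ x : ℝ, ENNReal.ofReal ((lam * f x) ^ (n + 1))) ≤
      ∑' m : ℕ, ENNReal.ofReal (Real.exp (lam * m) * (2 / (Nat.factorial m : ℝ))) := by
    calc (∑' n : ℕ, ((Nat.factorial (n + 1) : ℝ≥0∞))⁻¹ *
        ∫⁻ x : ℝ, ENNReal.ofReal ((lam * f x) ^ (n + 1)))
        ≤ ∑' n : ℕ, ((Nat.factorial (n + 1) : ℝ≥0∞))⁻¹ *
          ∑' m : ℕ, ENNReal.ofReal ((lam * (m : ℝ)) ^ (n + 1)) * c m :=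
        ENNReal.tsum_le_tsum fun n => mul_le_mul_right (hint n) _
      _ = ∑' n : ℕ, ∑' m : ℕ, ((Nat.factorial (n + 1) : ℝ≥0∞))⁻¹ *
          ENNReal.ofReal ((lam * (m : ℝ)) ^ (n + 1)) * c m := by
          congr 1; funext n
          rw [← ENNReal.tsum_mul_left]
          congr 1; funext m; ring
      _ = ∑' m : ℕ, ∑' n : ℕ, ((Nat.factorial (n + 1) : ℝ≥0∞))⁻¹ *
          ENNReal.ofReal ((lam * (m : ℝ)) ^ (n + 1)) * c m := ENNReal.tsum_comm
      _ = ∑' m : ℕ, (∑' n : ℕ, ((Nat.factorial (n + 1) : ℝ≥0∞))⁻¹ *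
          ENNReal.ofReal ((lam * (m : ℝ)) ^ (n + 1))) * c m := by
          congr 1; funext m
          rw [ENNReal.tsum_mul_right]
      _ ≤ ∑' m : ℕ, ENNReal.ofReal (Real.exp (lam * m)) * c m :=
        ENNReal.tsum_le_tsum fun m => mul_le_mul_left (hsummand m) _
      _ = ∑' m : ℕ, ENNReal.ofReal (Real.exp (lam * m) * (2 / (Nat.factorial m : ℝ))) := by
          congr 1; funext m
          rw [hc, ← ENNReal.ofReal_mul (Real.exp_nonneg _)]
  refine ne_top_of_le_ne_top ?_ hchain
  rw [← ENNReal.ofReal_tsum_of_nonneg (fun m => by positivity) hbig]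
  exact ENNReal.ofReal_ne_top
end

section
/- Let μ be a measure and 1 ≤ p < ∞. Define E_p = {f ∈ L^p(μ) : ∑_{n=1}^∞ ‖|f|^n‖_p / n! < ∞} (where ‖|f|^n‖_p = (∫ |f|^{np} dμ)^{1/p}). Then E_p is a balanced convex set: if f ∈ E_p and |λ| ≤ 1 then λf ∈ E_p, and if f, g ∈ E_p and 0 ≤ t ≤ 1 then tf + (1-t)g ∈ E_p. -/
open MeasureTheory ENNReal

/-- the set `E_p` of `(p)`-exponentiable functions
(`∑_{n≥1} ‖|f|^n‖_p / n! < ∞`) is balanced and convex. -/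
theorem stmt4 {α : Type*} [MeasurableSpace α] (μ : Measure α)
    (p : ℝ≥0∞) (hp : 1 ≤ p) (hp' : p ≠ ⊤) (f g : α → ℝ)
    (hf : AEStronglyMeasurable f μ) (hg : AEStronglyMeasurable g μ)
    (hfLp : MemLp f p μ) (hgLp : MemLp g p μ)
    (hfE : ∑' n : ℕ, ((Nat.factorial (n + 1) : ℝ≥0∞))⁻¹ *
        eLpNorm (fun x => |f x| ^ (n + 1)) p μ ≠ ⊤)
    (hgE : ∑' n : ℕ, ((Nat.factorial (n + 1) : ℝ≥0∞))⁻¹ *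
        eLpNorm (fun x => |g x| ^ (n + 1)) p μ ≠ ⊤) :
    (∀ c : ℝ, |c| ≤ 1 →
      ∑' n : ℕ, ((Nat.factorial (n + 1) : ℝ≥0∞))⁻¹ *
        eLpNorm (fun x => |c * f x| ^ (n + 1)) p μ ≠ ⊤) ∧
    (∀ t : ℝ, 0 ≤ t → t ≤ 1 →
      ∑' n : ℕ, ((Nat.factorial (n + 1) : ℝ≥0∞))⁻¹ *
        eLpNorm (fun x => |t * f x + (1 - t) * g x| ^ (n + 1)) p μ ≠ ⊤) := by
  constructor
  · intro c hc
    have hle : ∀ n : ℕ,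
        ((Nat.factorial (n + 1) : ℝ≥0∞))⁻¹ *
            eLpNorm (fun x => |c * f x| ^ (n + 1)) p μ ≤
        ((Nat.factorial (n + 1) : ℝ≥0∞))⁻¹ *
            eLpNorm (fun x => |f x| ^ (n + 1)) p μ := by
      intro n
      refine mul_le_mul_right (eLpNorm_mono fun x => ?_) _
      simp only [Real.norm_eq_abs, abs_abs, abs_pow, abs_mul]
      refine pow_le_pow_left₀ (mul_nonneg (abs_nonneg _) (abs_nonneg _)) ?_ _
      nlinarith [abs_nonneg (f x), abs_nonneg c]
    exact ne_top_of_le_ne_top hfE (ENNReal.tsum_le_tsum hle)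
  · intro t ht0 ht1
    have habs : AEStronglyMeasurable (fun x => |f x|) μ := hf.norm
    have hgabs : AEStronglyMeasurable (fun x => |g x|) μ := hg.norm
    have hle : ∀ n : ℕ,
        ((Nat.factorial (n + 1) : ℝ≥0∞))⁻¹ *
            eLpNorm (fun x => |t * f x + (1 - t) * g x| ^ (n + 1)) p μ ≤
        ((Nat.factorial (n + 1) : ℝ≥0∞))⁻¹ *
            eLpNorm (fun x => |f x| ^ (n + 1)) p μ +
        ((Nat.factorial (n + 1) : ℝ≥0∞))⁻¹ *
            eLpNorm (fun x => |g x| ^ (n + 1)) p μ := by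
      intro n
      rw [← mul_add]
      refine mul_le_mul_right ?_ _
      have step1 : eLpNorm (fun x => |t * f x + (1 - t) * g x| ^ (n + 1)) p μ ≤
          eLpNorm (fun x => |f x| ^ (n + 1) + |g x| ^ (n + 1)) p μ := by
        refine eLpNorm_mono fun x => ?_
        have h1t : (0:ℝ) ≤ 1 - t := by linarith
        have h1 : |t * f x + (1 - t) * g x| ≤ t * |f x| + (1 - t) * |g x| := by
          calc |t * f x + (1 - t) * g x| ≤ |t * f x| + |(1 - t) * g x| := abs_add_le _ _
            _ = t * |f x| + (1 - t) * |g x| := by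
                rw [abs_mul, abs_mul, abs_of_nonneg ht0, abs_of_nonneg h1t]
        have h2 : (t * |f x| + (1 - t) * |g x|) ^ (n + 1) ≤
            t * |f x| ^ (n + 1) + (1 - t) * |g x| ^ (n + 1) := by
          have := (convexOn_pow (n + 1)).2 (Set.mem_Ici.2 (abs_nonneg (f x)))
            (Set.mem_Ici.2 (abs_nonneg (g x))) ht0 (by linarith : (0:ℝ) ≤ 1 - t)
            (by ring : t + (1 - t) = 1)
          simpa [smul_eq_mul] using this
        have h3 : t * |f x| ^ (n + 1) + (1 - t) * |g x| ^ (n + 1) ≤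
            |f x| ^ (n + 1) + |g x| ^ (n + 1) := by
          have hf1 : (0:ℝ) ≤ |f x| ^ (n + 1) := pow_nonneg (abs_nonneg _) _
          have hg1 : (0:ℝ) ≤ |g x| ^ (n + 1) := pow_nonneg (abs_nonneg _) _
          nlinarith
        have hpow : |t * f x + (1 - t) * g x| ^ (n + 1) ≤
            |f x| ^ (n + 1) + |g x| ^ (n + 1) := by
          calc |t * f x + (1 - t) * g x| ^ (n + 1)
              ≤ (t * |f x| + (1 - t) * |g x|) ^ (n + 1) :=
                pow_le_pow_left₀ (abs_nonneg _) h1 _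
            _ ≤ t * |f x| ^ (n + 1) + (1 - t) * |g x| ^ (n + 1) := h2
            _ ≤ |f x| ^ (n + 1) + |g x| ^ (n + 1) := h3
        have hnn : (0:ℝ) ≤ |f x| ^ (n + 1) + |g x| ^ (n + 1) :=
          add_nonneg (pow_nonneg (abs_nonneg _) _) (pow_nonneg (abs_nonneg _) _)
        simp only [Real.norm_eq_abs, abs_pow, abs_abs]
        rw [abs_of_nonneg hnn]
        exact hpow
      have step2 : eLpNorm (fun x => |f x| ^ (n + 1) + |g x| ^ (n + 1)) p μ ≤
          eLpNorm (fun x => |f x| ^ (n + 1)) p μ +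
          eLpNorm (fun x => |g x| ^ (n + 1)) p μ :=
        eLpNorm_add_le (habs.pow _) (hgabs.pow _) hp
      exact step1.trans step2
    refine ((ENNReal.tsum_le_tsum hle).trans_lt ?_).ne
    rw [ENNReal.tsum_add]
    exact ENNReal.add_lt_top.2 ⟨hfE.lt_top, hgE.lt_top⟩
end

section
/- Let μ be a measure and 1 ≤ p, q, r ≤ ∞ with 1/p + 1/q = 1/r. If f and g are nonnegative measurable functions with ∑_{n=1}^∞ (1/n!) ∫ f^{np} dμ < ∞ and ∑_{n=1}^∞ (1/n!) ∫ g^{nq} dμ < ∞, then ∑_{n=1}^∞ (1/n!) ∫ (fg)^{nr} dμ < ∞. -/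
open MeasureTheory ENNReal

/-- Hölder-type stability of exponentiability under products:
if `1/p + 1/q = 1/r` and `f` is `p`-exponentiable and `g` is `q`-exponentiable,
then `fg` is `r`-exponentiable. -/
theorem stmt6 {α : Type*} [MeasurableSpace α] (μ : Measure α)
    (p q r : ℝ) (hp : 1 ≤ p) (hq : 1 ≤ q) (hr : 1 ≤ r) (hpqr : 1 / p + 1 / q = 1 / r)
    (f g : α → ℝ≥0∞) (hf : Measurable f) (hg : Measurable g)
    (hfE : ∑' n : ℕ, ((Nat.factorial (n + 1) : ℝ≥0∞))⁻¹ *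
        ∫⁻ x, f x ^ (((n : ℝ) + 1) * p) ∂μ ≠ ⊤)
    (hgE : ∑' n : ℕ, ((Nat.factorial (n + 1) : ℝ≥0∞))⁻¹ *
        ∫⁻ x, g x ^ (((n : ℝ) + 1) * q) ∂μ ≠ ⊤) :
    ∑' n : ℕ, ((Nat.factorial (n + 1) : ℝ≥0∞))⁻¹ *
        ∫⁻ x, (f x * g x) ^ (((n : ℝ) + 1) * r) ∂μ ≠ ⊤ := by
  have hp0 : 0 < p := lt_of_lt_of_le zero_lt_one hp
  have hq0 : 0 < q := lt_of_lt_of_le zero_lt_one hq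
  have hr0 : 0 < r := lt_of_lt_of_le zero_lt_one hr
  -- conjugate exponents p/r and q/r
  have hrp : r / p + r / q = 1 := by field_simp at hpqr ⊢; nlinarith [hpqr]
  have hrp_lt : r < p := by
    by_contra h
    push_neg at h
    have h1 : 1 / r ≤ 1 / p := one_div_le_one_div_of_le hp0 h
    have h2 : 0 < 1 / q := by positivity
    linarith
  have hrq_lt : r < q := by
    by_contra h
    push_neg at h
    have h1 : 1 / r ≤ 1 / q := one_div_le_one_div_of_le hq0 h
    have h2 : 0 < 1 / p := by positivity
    linarith
  have hconj : (p / r).HolderConjugate (q / r) := by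
    constructor
    · rw [inv_div, inv_div, inv_one]; exact hrp
    · positivity
    · positivity
  set s : ℝ := r / p with hs_def
  set t : ℝ := r / q with ht_def
  have hs0 : 0 < s := by positivity
  have ht0 : 0 < t := by positivity
  have hs1 : s < 1 := by rw [hs_def, div_lt_one hp0]; exact hrp_lt
  have ht1 : t < 1 := by rw [ht_def, div_lt_one hq0]; exact hrq_lt
  have hst : s + t = 1 := hrp
  set A : ℕ → ℝ≥0∞ := fun n => ((Nat.factorial (n + 1) : ℝ≥0∞))⁻¹ *
      ∫⁻ x, f x ^ (((n : ℝ) + 1) * p) ∂μ with hA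
  set B : ℕ → ℝ≥0∞ := fun n => ((Nat.factorial (n + 1) : ℝ≥0∞))⁻¹ *
      ∫⁻ x, g x ^ (((n : ℝ) + 1) * q) ∂μ with hB
  -- pointwise (in n) Hölder bound
  have key : ∀ n : ℕ, ((Nat.factorial (n + 1) : ℝ≥0∞))⁻¹ *
      ∫⁻ x, (f x * g x) ^ (((n : ℝ) + 1) * r) ∂μ ≤ A n ^ s * B n ^ t := by
    intro n
    set N : ℝ := (n : ℝ) + 1 with hN
    have hN0 : 0 ≤ N := by positivity
    set c : ℝ≥0∞ := ((Nat.factorial (n + 1) : ℝ≥0∞))⁻¹ with hc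
    have hc0 : c ≠ 0 := by
      simp [hc, Nat.factorial_ne_zero]
    have hctop : c ≠ ⊤ := by
      simp [hc, Nat.factorial_ne_zero]
    have hint : ∫⁻ x, (f x * g x) ^ (N * r) ∂μ ≤
        (∫⁻ x, f x ^ (N * p) ∂μ) ^ s * (∫⁻ x, g x ^ (N * q) ∂μ) ^ t := by
      have hH := ENNReal.lintegral_mul_le_Lp_mul_Lq μ hconj
        (f := fun x => f x ^ (N * r)) (g := fun x => g x ^ (N * r))
        (hf.pow_const _).aemeasurable (hg.pow_const _).aemeasurable
      calc ∫⁻ x, (f x * g x) ^ (N * r) ∂μ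
          = ∫⁻ x, f x ^ (N * r) * g x ^ (N * r) ∂μ := by
            congr 1; funext x
            exact ENNReal.mul_rpow_of_nonneg _ _ (by positivity)
        _ ≤ (∫⁻ x, (f x ^ (N * r)) ^ (p / r) ∂μ) ^ (1 / (p / r)) *
            (∫⁻ x, (g x ^ (N * r)) ^ (q / r) ∂μ) ^ (1 / (q / r)) := hH
        _ = (∫⁻ x, f x ^ (N * p) ∂μ) ^ s * (∫⁻ x, g x ^ (N * q) ∂μ) ^ t := by
            rw [one_div_div, one_div_div]
            have e1 : ∫⁻ x, (f x ^ (N * r)) ^ (p / r) ∂μ = ∫⁻ x, f x ^ (N * p) ∂μ := by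
              refine lintegral_congr fun x => ?_
              rw [← ENNReal.rpow_mul]
              congr 1
              field_simp
            have e2 : ∫⁻ x, (g x ^ (N * r)) ^ (q / r) ∂μ = ∫⁻ x, g x ^ (N * q) ∂μ := by
              refine lintegral_congr fun x => ?_
              rw [← ENNReal.rpow_mul]
              congr 1
              field_simp
            rw [e1, e2]
    calc c * ∫⁻ x, (f x * g x) ^ (N * r) ∂μ
        ≤ c * ((∫⁻ x, f x ^ (N * p) ∂μ) ^ s * (∫⁻ x, g x ^ (N * q) ∂μ) ^ t) :=
          mul_le_mul_right hint c
      _ = (c ^ s * c ^ t) * ((∫⁻ x, f x ^ (N * p) ∂μ) ^ s * (∫⁻ x, g x ^ (N * q) ∂μ) ^ t) := by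
          rw [← ENNReal.rpow_add _ _ hc0 hctop, hst, ENNReal.rpow_one]
      _ = A n ^ s * B n ^ t := by
          rw [hA, hB]
          simp only [← hc]
          rw [ENNReal.mul_rpow_of_nonneg _ _ hs0.le, ENNReal.mul_rpow_of_nonneg _ _ ht0.le]
          ring
  -- discrete Hölder for the sums
  have hconj' : (1 / s).HolderConjugate (1 / t) := by
    constructor
    · rw [one_div, one_div, inv_inv, inv_inv, inv_one]; exact hst
    · positivity
    · positivity
  have hsum : ∑' n : ℕ, A n ^ s * B n ^ t ≤
      (∑' n : ℕ, A n) ^ s * (∑' n : ℕ, B n) ^ t := by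
    have hH := ENNReal.lintegral_mul_le_Lp_mul_Lq (Measure.count : Measure ℕ) hconj'
      (f := fun n => A n ^ s) (g := fun n => B n ^ t)
      (Measurable.aemeasurable (by measurability)) (Measurable.aemeasurable (by measurability))
    rw [lintegral_count, lintegral_count, lintegral_count] at hH
    calc ∑' n : ℕ, A n ^ s * B n ^ t
        ≤ (∑' n : ℕ, (A n ^ s) ^ (1 / s)) ^ (1 / (1 / s)) *
          (∑' n : ℕ, (B n ^ t) ^ (1 / t)) ^ (1 / (1 / t)) := hH
      _ = (∑' n : ℕ, A n) ^ s * (∑' n : ℕ, B n) ^ t := by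
          rw [one_div_one_div, one_div_one_div]
          have e1 : ∑' n : ℕ, (A n ^ s) ^ (1 / s) = ∑' n : ℕ, A n :=
            tsum_congr fun n => by
              rw [← ENNReal.rpow_mul, mul_one_div, div_self hs0.ne', ENNReal.rpow_one]
          have e2 : ∑' n : ℕ, (B n ^ t) ^ (1 / t) = ∑' n : ℕ, B n :=
            tsum_congr fun n => by
              rw [← ENNReal.rpow_mul, mul_one_div, div_self ht0.ne', ENNReal.rpow_one]
          rw [e1, e2]
  have hfin : (∑' n : ℕ, A n) ^ s * (∑' n : ℕ, B n) ^ t ≠ ⊤ :=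
    ENNReal.mul_ne_top (ENNReal.rpow_ne_top_of_nonneg hs0.le hfE)
      (ENNReal.rpow_ne_top_of_nonneg ht0.le hgE)
  exact ne_top_of_le_ne_top hfin ((ENNReal.tsum_le_tsum key).trans hsum)
end

section
/- Let μ be a measure and 1 ≤ p < ∞. Define E_{p,∞} = {f ∈ L^p(μ) : for all λ > 0, ∑_{n=1}^∞ λ^n ‖|f|^n‖_p / n! < ∞}. Then E_{p,∞} is a linear subspace of L^p(μ). -/
open MeasureTheory ENNReal

lemma stmt7_aux_pow (x y a b : ℝ) (K : ℝ) (hK : K = 2 * (|a| + |b| + 1)) (m : ℕ) :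
    |a * x + b * y| ^ m ≤ K ^ m * (|x| ^ m + |y| ^ m) := by
  have h1 : |a * x + b * y| ≤ (|a| + |b| + 1) * (|x| + |y|) := by
    calc |a * x + b * y| ≤ |a| * |x| + |b| * |y| := by
          simpa [abs_mul] using abs_add_le (a * x) (b * y)
      _ ≤ (|a| + |b| + 1) * (|x| + |y|) := by
          nlinarith [abs_nonneg a, abs_nonneg b, abs_nonneg x, abs_nonneg y]
  have h2 : (|x| + |y|) ^ m ≤ 2 ^ m * (|x| ^ m + |y| ^ m) := by
    have hmax : |x| + |y| ≤ 2 * max |x| |y| := by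
      rcases le_total |x| |y| with h | h <;> simp [max_eq_right, max_eq_left, h] <;> linarith
    calc (|x| + |y|) ^ m ≤ (2 * max |x| |y|) ^ m :=
          pow_le_pow_left₀ (by positivity) hmax m
      _ = 2 ^ m * (max |x| |y|) ^ m := mul_pow _ _ m
      _ ≤ 2 ^ m * (|x| ^ m + |y| ^ m) := by
          gcongr
          rcases le_total |x| |y| with h | h
          · rw [max_eq_right h]; nlinarith [pow_nonneg (abs_nonneg x) m]
          · rw [max_eq_left h]; nlinarith [pow_nonneg (abs_nonneg y) m]
  calc |a * x + b * y| ^ m ≤ ((|a| + |b| + 1) * (|x| + |y|)) ^ m :=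
        pow_le_pow_left₀ (abs_nonneg _) h1 m
    _ = (|a| + |b| + 1) ^ m * (|x| + |y|) ^ m := mul_pow _ _ m
    _ ≤ (|a| + |b| + 1) ^ m * (2 ^ m * (|x| ^ m + |y| ^ m)) := by gcongr
    _ = K ^ m * (|x| ^ m + |y| ^ m) := by rw [hK, mul_pow]; ring

/-- the set `E_{p,∞}` of functions that are `(p,λ)`-exponentiable
for every `λ > 0` is a linear subspace of `L^p`. -/
theorem stmt7 {α : Type*} [MeasurableSpace α] (μ : Measure α)
    (p : ℝ≥0∞) (hp : 1 ≤ p) (hp' : p ≠ ⊤) (f g : α → ℝ)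
    (hf : AEStronglyMeasurable f μ) (hg : AEStronglyMeasurable g μ)
    (hfLp : MemLp f p μ) (hgLp : MemLp g p μ)
    (hfE : ∀ lam : ℝ, 0 < lam →
      ∑' n : ℕ, ENNReal.ofReal (lam ^ (n + 1)) * ((Nat.factorial (n + 1) : ℝ≥0∞))⁻¹ *
        eLpNorm (fun x => |f x| ^ (n + 1)) p μ ≠ ⊤)
    (hgE : ∀ lam : ℝ, 0 < lam →
      ∑' n : ℕ, ENNReal.ofReal (lam ^ (n + 1)) * ((Nat.factorial (n + 1) : ℝ≥0∞))⁻¹ *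
        eLpNorm (fun x => |g x| ^ (n + 1)) p μ ≠ ⊤)
    (a b : ℝ) :
    MemLp (fun x => a * f x + b * g x) p μ ∧
    ∀ lam : ℝ, 0 < lam →
      ∑' n : ℕ, ENNReal.ofReal (lam ^ (n + 1)) * ((Nat.factorial (n + 1) : ℝ≥0∞))⁻¹ *
        eLpNorm (fun x => |a * f x + b * g x| ^ (n + 1)) p μ ≠ ⊤ := by
  refine ⟨(hfLp.const_mul a).add (hgLp.const_mul b), ?_⟩
  intro lam hlam
  obtain ⟨K, hK⟩ : ∃ K : ℝ, K = 2 * (|a| + |b| + 1) := ⟨_, rfl⟩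
  have hKpos : 0 < K := by rw [hK]; positivity
  have hM : 0 < lam * K := by positivity
  have key : ∀ n : ℕ,
      ENNReal.ofReal (lam ^ (n + 1)) * ((Nat.factorial (n + 1) : ℝ≥0∞))⁻¹ *
        eLpNorm (fun x => |a * f x + b * g x| ^ (n + 1)) p μ
      ≤ ENNReal.ofReal ((lam * K) ^ (n + 1)) * ((Nat.factorial (n + 1) : ℝ≥0∞))⁻¹ *
          eLpNorm (fun x => |f x| ^ (n + 1)) p μ
        + ENNReal.ofReal ((lam * K) ^ (n + 1)) * ((Nat.factorial (n + 1) : ℝ≥0∞))⁻¹ *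
          eLpNorm (fun x => |g x| ^ (n + 1)) p μ := by
    intro n
    set m := n + 1 with hm
    have hFm : AEStronglyMeasurable (fun x => K ^ m * |f x| ^ m) μ :=
      ((continuous_abs.comp_aestronglyMeasurable hf).pow m).const_mul _
    have hGm : AEStronglyMeasurable (fun x => K ^ m * |g x| ^ m) μ :=
      ((continuous_abs.comp_aestronglyMeasurable hg).pow m).const_mul _
    have step1 : eLpNorm (fun x => |a * f x + b * g x| ^ m) p μ ≤
        eLpNorm (fun x => K ^ m * |f x| ^ m + K ^ m * |g x| ^ m) p μ := by
      apply eLpNorm_mono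
      intro x
      have h0 := stmt7_aux_pow (f x) (g x) a b K hK m
      calc ‖|a * f x + b * g x| ^ m‖ = |a * f x + b * g x| ^ m := by
            rw [Real.norm_eq_abs, abs_pow, abs_abs]
        _ ≤ K ^ m * |f x| ^ m + K ^ m * |g x| ^ m := by rw [mul_add] at h0; linarith
        _ ≤ ‖K ^ m * |f x| ^ m + K ^ m * |g x| ^ m‖ := by
            rw [Real.norm_eq_abs]; exact le_abs_self _
    have step2 : eLpNorm (fun x => K ^ m * |f x| ^ m + K ^ m * |g x| ^ m) p μ ≤
        eLpNorm (fun x => K ^ m * |f x| ^ m) p μ + eLpNorm (fun x => K ^ m * |g x| ^ m) p μ :=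
      eLpNorm_add_le hFm hGm hp
    have smulf : eLpNorm (fun x => K ^ m * |f x| ^ m) p μ =
        ENNReal.ofReal (K ^ m) * eLpNorm (fun x => |f x| ^ m) p μ := by
      rw [show (fun x : α => K ^ m * |f x| ^ m) = K ^ m • (fun x => |f x| ^ m) from rfl,
        eLpNorm_const_smul, ← ofReal_norm_eq_enorm, Real.norm_eq_abs,
        abs_of_nonneg (by positivity : (0:ℝ) ≤ K ^ m)]
    have smulg : eLpNorm (fun x => K ^ m * |g x| ^ m) p μ =
        ENNReal.ofReal (K ^ m) * eLpNorm (fun x => |g x| ^ m) p μ := by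
      rw [show (fun x : α => K ^ m * |g x| ^ m) = K ^ m • (fun x => |g x| ^ m) from rfl,
        eLpNorm_const_smul, ← ofReal_norm_eq_enorm, Real.norm_eq_abs,
        abs_of_nonneg (by positivity : (0:ℝ) ≤ K ^ m)]
    calc ENNReal.ofReal (lam ^ m) * ((Nat.factorial m : ℝ≥0∞))⁻¹ *
          eLpNorm (fun x => |a * f x + b * g x| ^ m) p μ
        ≤ ENNReal.ofReal (lam ^ m) * ((Nat.factorial m : ℝ≥0∞))⁻¹ *
          (ENNReal.ofReal (K ^ m) * eLpNorm (fun x => |f x| ^ m) p μ +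
           ENNReal.ofReal (K ^ m) * eLpNorm (fun x => |g x| ^ m) p μ) := by
          gcongr
          exact step1.trans (step2.trans (by rw [smulf, smulg]))
      _ = ENNReal.ofReal ((lam * K) ^ m) * ((Nat.factorial m : ℝ≥0∞))⁻¹ *
            eLpNorm (fun x => |f x| ^ m) p μ +
          ENNReal.ofReal ((lam * K) ^ m) * ((Nat.factorial m : ℝ≥0∞))⁻¹ *
            eLpNorm (fun x => |g x| ^ m) p μ := by
          have hof : ENNReal.ofReal ((lam * K) ^ m) =
              ENNReal.ofReal (lam ^ m) * ENNReal.ofReal (K ^ m) := by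
            rw [mul_pow, ENNReal.ofReal_mul (le_of_lt (pow_pos hlam m))]
          rw [hof]; ring
  have hle : ∑' n : ℕ, ENNReal.ofReal (lam ^ (n + 1)) * ((Nat.factorial (n + 1) : ℝ≥0∞))⁻¹ *
        eLpNorm (fun x => |a * f x + b * g x| ^ (n + 1)) p μ
      ≤ (∑' n : ℕ, ENNReal.ofReal ((lam * K) ^ (n + 1)) * ((Nat.factorial (n + 1) : ℝ≥0∞))⁻¹ *
          eLpNorm (fun x => |f x| ^ (n + 1)) p μ) +
        (∑' n : ℕ, ENNReal.ofReal ((lam * K) ^ (n + 1)) * ((Nat.factorial (n + 1) : ℝ≥0∞))⁻¹ *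
          eLpNorm (fun x => |g x| ^ (n + 1)) p μ) := by
    rw [← ENNReal.tsum_add]
    exact ENNReal.tsum_le_tsum key
  exact ne_top_of_le_ne_top (ENNReal.add_ne_top.2 ⟨hfE _ hM, hgE _ hM⟩) hle
end

section
/- Let A be a Banach algebra and t ↦ A(t) a continuous bounded function on [0, T]. Then Exp_l(∫_0^t; -A(s)ds) · Exp_r(∫_0^t; A(s)ds) = 1 and Exp_r(∫_0^t; A(s)ds) · Exp_l(∫_0^t; -A(s)ds) = 1 for all t ∈ [0, T]. -/
open MeasureTheory intervalIntegral

section Aux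

variable {𝔸 : Type*} [NormedRing 𝔸] [NormOneClass 𝔸] [NormedAlgebra ℝ 𝔸]
    [CompleteSpace 𝔸]

/-- Continuity and derivative of the iterated-integral terms. -/
theorem stmt13_aux_deriv (f : ℝ → 𝔸) (hf : Continuous f) (b : ℝ) :
    HasDerivAt (fun u => ∫ s in (0 : ℝ)..u, f s) (f b) b :=
  (hf.integral_hasStrictDerivAt 0 b).hasDerivAt

/-- Norm bound on the iterated-integral terms: `‖B n s‖ ≤ C^n s^n / n!` on `[0, t]`. -/
theorem stmt13_aux_bound (t C : ℝ) (hC0 : 0 ≤ C) (B : ℕ → ℝ → 𝔸) (h : ℕ → ℝ → 𝔸)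
    (hBc : ∀ n, Continuous (B n))
    (hB0 : ∀ s : ℝ, B 0 s = 1)
    (hBs : ∀ n : ℕ, ∀ s : ℝ, B (n + 1) s = ∫ u in (0 : ℝ)..s, h n u)
    (hh : ∀ n u, u ∈ Set.Icc (0 : ℝ) t → ‖h n u‖ ≤ ‖B n u‖ * C)
    (hhc : ∀ n, Continuous (h n)) :
    ∀ n, ∀ s ∈ Set.Icc (0 : ℝ) t, ‖B n s‖ ≤ C ^ n * s ^ n / n.factorial := by
  intro n
  induction n with
  | zero => intro s _; simp [hB0]
  | succ n ih =>
    intro s hs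
    obtain ⟨hs0, hst⟩ := hs
    have key : ∀ u ∈ Set.Icc (0 : ℝ) s, ‖h n u‖ ≤ C ^ n * u ^ n / n.factorial * C := by
      intro u hu
      have hu' : u ∈ Set.Icc (0 : ℝ) t := ⟨hu.1, hu.2.trans hst⟩
      calc ‖h n u‖ ≤ ‖B n u‖ * C := hh n u hu'
        _ ≤ C ^ n * u ^ n / n.factorial * C :=
          mul_le_mul_of_nonneg_right (ih u hu') hC0
    have h1 : ‖B (n + 1) s‖ ≤ ∫ u in (0 : ℝ)..s, ‖h n u‖ := by
      rw [hBs n s]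
      exact intervalIntegral.norm_integral_le_integral_norm hs0
    have h2 : (∫ u in (0 : ℝ)..s, ‖h n u‖) ≤
        ∫ u in (0 : ℝ)..s, C ^ n * u ^ n / n.factorial * C := by
      apply intervalIntegral.integral_mono_on hs0
      · exact ((hhc n).norm).intervalIntegrable 0 s
      · exact (Continuous.intervalIntegrable (by continuity) 0 s)
      · exact key
    have h3 : (∫ u in (0 : ℝ)..s, C ^ n * u ^ n / n.factorial * C)
        = C ^ (n + 1) * s ^ (n + 1) / (n + 1).factorial := by
      have : (fun u : ℝ => C ^ n * u ^ n / n.factorial * C)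
          = fun u : ℝ => (C ^ n / n.factorial * C) * u ^ n := by
        funext u; ring
      rw [this, intervalIntegral.integral_const_mul, integral_pow]
      have hnf : (n.factorial : ℝ) ≠ 0 := Nat.cast_ne_zero.2 n.factorial_ne_zero
      have hn1 : ((n : ℝ) + 1) ≠ 0 := by positivity
      rw [Nat.factorial_succ]
      push_cast
      field_simp
      ring
    calc ‖B (n + 1) s‖ ≤ _ := h1
      _ ≤ _ := h2
      _ = _ := h3

end Aux

/-- `Exp_l(∫_0^t; -A(s) ds)` and `Exp_r(∫_0^t; A(s) ds)` are mutually
inverse. `F n` is the `n`-th term of the right expansional of `A`, and `G n` the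
`n`-th term of the left expansional of `-A`. -/
theorem stmt13 {𝔸 : Type*} [NormedRing 𝔸] [NormOneClass 𝔸] [NormedAlgebra ℝ 𝔸]
    [CompleteSpace 𝔸]
    (A : ℝ → 𝔸) (hA : Continuous A)
    (F G : ℕ → ℝ → 𝔸)
    (hF0 : ∀ t : ℝ, F 0 t = 1)
    (hFs : ∀ n : ℕ, ∀ t : ℝ, F (n + 1) t = ∫ s in (0 : ℝ)..t, F n s * A s)
    (hG0 : ∀ t : ℝ, G 0 t = 1)
    (hGs : ∀ n : ℕ, ∀ t : ℝ, G (n + 1) t = ∫ s in (0 : ℝ)..t, (-A s) * G n s)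
    (t : ℝ) (ht : 0 ≤ t) :
    (∑' n : ℕ, G n t) * (∑' n : ℕ, F n t) = 1 ∧
    (∑' n : ℕ, F n t) * (∑' n : ℕ, G n t) = 1 := by
  -- function equalities
  have hFfun : ∀ n, F (n + 1) = fun u => ∫ s in (0 : ℝ)..u, F n s * A s :=
    fun n => funext (hFs n)
  have hGfun : ∀ n, G (n + 1) = fun u => ∫ s in (0 : ℝ)..u, (-A s) * G n s :=
    fun n => funext (hGs n)
  have hF0fun : F 0 = fun _ => (1 : 𝔸) := funext hF0
  have hG0fun : G 0 = fun _ => (1 : 𝔸) := funext hG0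
  -- continuity
  have hFc : ∀ n, Continuous (F n) := by
    intro n
    induction n with
    | zero => rw [hF0fun]; exact continuous_const
    | succ n ih =>
      rw [hFfun n]
      exact Differentiable.continuous
        (fun b => (stmt13_aux_deriv _ (ih.mul hA) b).differentiableAt)
  have hGc : ∀ n, Continuous (G n) := by
    intro n
    induction n with
    | zero => rw [hG0fun]; exact continuous_const
    | succ n ih =>
      rw [hGfun n]
      exact Differentiable.continuous
        (fun b => (stmt13_aux_deriv _ ((hA.neg).mul ih) b).differentiableAt)
  -- derivatives
  set DF : ℕ → ℝ → 𝔸 := fun n =>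
    Nat.casesOn n (fun _ => 0) (fun k b => F k b * A b) with hDF
  set DG : ℕ → ℝ → 𝔸 := fun n =>
    Nat.casesOn n (fun _ => 0) (fun k b => -A b * G k b) with hDG
  have hFd : ∀ n b, HasDerivAt (F n) (DF n b) b := by
    intro n b
    cases n with
    | zero => rw [hF0fun]; exact hasDerivAt_const b 1
    | succ n => rw [hFfun n]; exact stmt13_aux_deriv _ ((hFc n).mul hA) b
  have hGd : ∀ n b, HasDerivAt (G n) (DG n b) b := by
    intro n b
    cases n with
    | zero => rw [hG0fun]; exact hasDerivAt_const b 1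
    | succ n => rw [hGfun n]; exact stmt13_aux_deriv _ ((hA.neg).mul (hGc n)) b
  -- values at 0
  have hFz : ∀ n, F (n + 1) 0 = 0 := by
    intro n; rw [hFs n 0, intervalIntegral.integral_same]
  have hGz : ∀ n, G (n + 1) 0 = 0 := by
    intro n; rw [hGs n 0, intervalIntegral.integral_same]
  -- the Cauchy-product terms
  set P : ℕ → ℝ → 𝔸 :=
    fun n s => ∑ p ∈ Finset.HasAntidiagonal.antidiagonal n, G p.1 s * F p.2 s with hPdef
  set Q : ℕ → ℝ → 𝔸 :=
    fun n s => ∑ p ∈ Finset.HasAntidiagonal.antidiagonal n, F p.1 s * G p.2 s with hQdef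
  have hP0 : ∀ s, P 0 s = 1 := by
    intro s; simp [hPdef, hF0, hG0]
  have hQ0 : ∀ s, Q 0 s = 1 := by
    intro s; simp [hQdef, hF0, hG0]
  -- derivative of P (n+1)
  have hPd : ∀ n s, HasDerivAt (P (n + 1))
      (-A s * P n s + P n s * A s) s := by
    intro n s
    have h := HasDerivAt.fun_sum (u := Finset.HasAntidiagonal.antidiagonal (n + 1))
      (fun p _ => ((hGd p.1 s).mul (hFd p.2 s)))
    refine HasDerivAt.congr_deriv h (Eq.symm ?_)
    rw [Finset.sum_add_distrib]
    congr 1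
    · -- ∑ DG p.1 * F p.2 = -A s * P n s
      rw [Finset.Nat.sum_antidiagonal_succ
        (f := fun p => DG p.1 s * F p.2 s)]
      simp only [hDG, hPdef]
      rw [Finset.mul_sum]
      simp [mul_assoc]
    · -- ∑ G p.1 * DF p.2 = P n s * A s
      rw [Finset.Nat.sum_antidiagonal_succ'
        (f := fun p => G p.1 s * DF p.2 s)]
      simp only [hDF, hPdef]
      rw [Finset.sum_mul]
      simp [mul_assoc]
  -- derivative of Q (n+1) is zero
  have hQd : ∀ n s, HasDerivAt (Q (n + 1)) 0 s := by
    intro n s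
    have h := HasDerivAt.fun_sum (u := Finset.HasAntidiagonal.antidiagonal (n + 1))
      (fun p _ => ((hFd p.1 s).mul (hGd p.2 s)))
    refine HasDerivAt.congr_deriv h (Eq.symm ?_)
    rw [Finset.sum_add_distrib]
    rw [Finset.Nat.sum_antidiagonal_succ
        (f := fun p => DF p.1 s * G p.2 s),
      Finset.Nat.sum_antidiagonal_succ'
        (f := fun p => F p.1 s * DG p.2 s)]
    simp only [hDF, hDG]
    simp [mul_assoc, ← Finset.sum_add_distrib]
  -- P (n+1) vanishes at 0, same for Q
  have hPz : ∀ n, P (n + 1) 0 = 0 := by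
    intro n
    apply Finset.sum_eq_zero
    intro p hp
    have hps := Finset.HasAntidiagonal.mem_antidiagonal.mp hp
    cases hq : p.1 with
    | zero =>
      have : p.2 = n + 1 := by omega
      rw [this, hFz n, mul_zero]
    | succ k => rw [hGz k, zero_mul]
  have hQz : ∀ n, Q (n + 1) 0 = 0 := by
    intro n
    apply Finset.sum_eq_zero
    intro p hp
    have hps := Finset.HasAntidiagonal.mem_antidiagonal.mp hp
    cases hq : p.1 with
    | zero =>
      have : p.2 = n + 1 := by omega
      rw [this, hGz n, mul_zero]
    | succ k => rw [hFz k, zero_mul]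
  -- P n s = if n = 0 then 1 else 0
  have hPval : ∀ n s, P n s = if n = 0 then (1 : 𝔸) else 0 := by
    intro n
    induction n with
    | zero => intro s; simpa using hP0 s
    | succ n ih =>
      intro s
      have hderiv : ∀ u, HasDerivAt (P (n + 1)) 0 u := by
        intro u
        have := hPd n u
        rw [ih u] at this
        rcases n with _ | m
        · simpa using this
        · simpa using this
      have hdiff : Differentiable ℝ (P (n + 1)) :=
        fun u => (hderiv u).differentiableAt
      have hd0 : ∀ u, deriv (P (n + 1)) u = 0 := fun u => (hderiv u).deriv
      have := is_const_of_deriv_eq_zero hdiff hd0 s 0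
      simp [this, hPz n]
  have hQval : ∀ n s, Q n s = if n = 0 then (1 : 𝔸) else 0 := by
    intro n
    rcases n with _ | n
    · intro s; simpa using hQ0 s
    · intro s
      have hdiff : Differentiable ℝ (Q (n + 1)) :=
        fun u => (hQd n u).differentiableAt
      have hd0 : ∀ u, deriv (Q (n + 1)) u = 0 := fun u => (hQd n u).deriv
      have := is_const_of_deriv_eq_zero hdiff hd0 s 0
      simp [this, hQz n]
  -- bound on A on [0, t]
  obtain ⟨C₀, hC₀⟩ := (isCompact_Icc (a := (0:ℝ)) (b := t)).exists_bound_of_continuousOn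
    hA.continuousOn
  set C : ℝ := max C₀ 0 with hCdef
  have hC0 : 0 ≤ C := le_max_right _ _
  have hC : ∀ s ∈ Set.Icc (0 : ℝ) t, ‖A s‖ ≤ C :=
    fun s hs => (hC₀ s hs).trans (le_max_left _ _)
  -- norm bounds
  have hFb := stmt13_aux_bound t C hC0 F (fun n s => F n s * A s) hFc hF0 hFs
    (fun n u hu =>
      (norm_mul_le _ _).trans (mul_le_mul_of_nonneg_left (hC u hu) (norm_nonneg _)))
    (fun n => (hFc n).mul hA)
  have hGb := stmt13_aux_bound t C hC0 G (fun n s => -A s * G n s) hGc hG0 hGs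
    (fun n u hu => by
      calc ‖-A u * G n u‖ ≤ ‖-A u‖ * ‖G n u‖ := norm_mul_le _ _
        _ = ‖G n u‖ * ‖A u‖ := by rw [norm_neg]; ring
        _ ≤ ‖G n u‖ * C := mul_le_mul_of_nonneg_left (hC u hu) (norm_nonneg _))
    (fun n => (hA.neg).mul (hGc n))
  -- summability
  have htmem : t ∈ Set.Icc (0 : ℝ) t := ⟨ht, le_refl t⟩
  have hsummaux : Summable (fun n : ℕ => C ^ n * t ^ n / n.factorial) := by
    have := Real.summable_pow_div_factorial (C * t)
    simpa [mul_pow] using this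
  have hFsum : Summable (fun n => ‖F n t‖) :=
    Summable.of_nonneg_of_le (fun n => norm_nonneg _)
      (fun n => hFb n t htmem) hsummaux
  have hGsum : Summable (fun n => ‖G n t‖) :=
    Summable.of_nonneg_of_le (fun n => norm_nonneg _)
      (fun n => hGb n t htmem) hsummaux
  constructor
  · rw [tsum_mul_tsum_eq_tsum_sum_antidiagonal_of_summable_norm hGsum hFsum]
    have : ∀ n : ℕ, (∑ p ∈ Finset.HasAntidiagonal.antidiagonal n, G p.1 t * F p.2 t)
        = if n = 0 then (1 : 𝔸) else 0 := fun n => hPval n t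
    rw [tsum_congr this]
    rw [tsum_eq_single 0 (fun b hb => if_neg hb)]; simp
  · rw [tsum_mul_tsum_eq_tsum_sum_antidiagonal_of_summable_norm hFsum hGsum]
    have : ∀ n : ℕ, (∑ p ∈ Finset.HasAntidiagonal.antidiagonal n, F p.1 t * G p.2 t)
        = if n = 0 then (1 : 𝔸) else 0 := fun n => hQval n t
    rw [tsum_congr this]
    rw [tsum_eq_single 0 (fun b hb => if_neg hb)]; simp
end

section
/- Let A be a Banach algebra and t ↦ A(t) a continuous bounded function. Then the cocycle identity holds: Exp_r(∫_0^t; A(s)ds) · Exp_r(∫_0^{t'}; A(s+t)ds) = Exp_r(∫_0^{t+t'}; A(s)ds). -/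
open MeasureTheory intervalIntegral

/-- cocycle identity for the right expansional:
`Exp_r(∫_0^t; A(s)ds) · Exp_r(∫_0^{t'}; A(s+t)ds) = Exp_r(∫_0^{t+t'}; A(s)ds)`.
`F n` is the `n`-th term of the right expansional of `A`, and `F₂ n` the `n`-th term of
the right expansional of `s ↦ A(s + t)`. -/
theorem stmt14 {𝔸 : Type*} [NormedRing 𝔸] [NormOneClass 𝔸] [NormedAlgebra ℝ 𝔸]
    [CompleteSpace 𝔸]
    (A : ℝ → 𝔸) (hA : Continuous A) (t t' : ℝ) (ht : 0 ≤ t) (ht' : 0 ≤ t')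
    (F F₂ : ℕ → ℝ → 𝔸)
    (hF0 : ∀ u : ℝ, F 0 u = 1)
    (hFs : ∀ n : ℕ, ∀ u : ℝ, F (n + 1) u = ∫ s in (0 : ℝ)..u, F n s * A s)
    (hF₂0 : ∀ u : ℝ, F₂ 0 u = 1)
    (hF₂s : ∀ n : ℕ, ∀ u : ℝ, F₂ (n + 1) u = ∫ s in (0 : ℝ)..u, F₂ n s * A (s + t)) :
    (∑' n : ℕ, F n t) * (∑' n : ℕ, F₂ n t') = ∑' n : ℕ, F n (t + t') := by
  -- continuity of A (· + t)
  have hA₂ : Continuous (fun s : ℝ => A (s + t)) := hA.comp (continuous_id.add continuous_const)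
  -- continuity of F n
  have hcont : ∀ n, Continuous (F n) := by
    intro n
    induction n with
    | zero =>
      have : F 0 = fun _ => (1 : 𝔸) := funext hF0
      rw [this]; exact continuous_const
    | succ n ih =>
      have : F (n + 1) = fun u => ∫ s in (0 : ℝ)..u, F n s * A s := funext (hFs n)
      rw [this]
      exact intervalIntegral.continuous_primitive
        (fun a b => ((ih.mul hA)).intervalIntegrable a b) 0
  have hcont₂ : ∀ n, Continuous (F₂ n) := by
    intro n
    induction n with
    | zero =>
      have : F₂ 0 = fun _ => (1 : 𝔸) := funext hF₂0
      rw [this]; exact continuous_const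
    | succ n ih =>
      have : F₂ (n + 1) = fun u => ∫ s in (0 : ℝ)..u, F₂ n s * A (s + t) := funext (hF₂s n)
      rw [this]
      exact intervalIntegral.continuous_primitive
        (fun a b => ((ih.mul hA₂)).intervalIntegrable a b) 0
  -- a bound for A on [0, t + t']
  obtain ⟨M₀, hM₀⟩ := (isCompact_Icc (a := (0:ℝ)) (b := t + t')).exists_bound_of_continuousOn
    hA.continuousOn
  set M : ℝ := max M₀ 0 with hMdef
  have hM : ∀ s ∈ Set.Icc (0:ℝ) (t + t'), ‖A s‖ ≤ M := fun s hs => (hM₀ s hs).trans (le_max_left _ _)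
  have hMnonneg : 0 ≤ M := le_max_right _ _
  -- norm bounds for F and F₂
  have hbound : ∀ n, ∀ u : ℝ, 0 ≤ u → u ≤ t + t' → ‖F n u‖ ≤ M ^ n * u ^ n / n.factorial := by
    intro n
    induction n with
    | zero => intro u hu hu'; simp [hF0]
    | succ n ih =>
      intro u hu hu'
      have key : ∀ s ∈ Set.Icc (0:ℝ) u, ‖F n s * A s‖ ≤ M ^ (n+1) * s ^ n / n.factorial := by
        intro s hs
        have hs1 : 0 ≤ s := hs.1
        have hs2 : s ≤ t + t' := hs.2.trans hu'
        calc ‖F n s * A s‖ ≤ ‖F n s‖ * ‖A s‖ := norm_mul_le _ _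
          _ ≤ (M ^ n * s ^ n / n.factorial) * M := by
              apply mul_le_mul (ih s hs1 hs2) (hM s ⟨hs1, hs2⟩) (norm_nonneg _)
              positivity
          _ = M ^ (n+1) * s ^ n / n.factorial := by ring
      calc ‖F (n+1) u‖ = ‖∫ s in (0:ℝ)..u, F n s * A s‖ := by rw [hFs]
        _ ≤ ∫ s in (0:ℝ)..u, ‖F n s * A s‖ :=
            intervalIntegral.norm_integral_le_integral_norm hu
        _ ≤ ∫ s in (0:ℝ)..u, M ^ (n+1) * s ^ n / n.factorial := by
            apply intervalIntegral.integral_mono_on hu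
              (((hcont n).mul hA).norm.intervalIntegrable 0 u)
              (((continuous_const.mul (continuous_pow n)).div_const
                (n.factorial : ℝ)).intervalIntegrable 0 u)
            exact key
        _ = M ^ (n+1) * u ^ (n+1) / (n+1).factorial := by
            have heq : ∀ r : ℝ, M ^ (n+1) * r ^ n / n.factorial
                = (M ^ (n+1) / n.factorial) * r ^ n := fun r => by ring
            simp_rw [heq]
            rw [intervalIntegral.integral_const_mul, integral_pow, zero_pow (Nat.succ_ne_zero n)]
            have h1 : ((n:ℝ) + 1) ≠ 0 := by positivity
            have h2 : ((n.factorial : ℝ)) ≠ 0 := by positivity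
            rw [Nat.factorial_succ, sub_zero]
            push_cast
            rw [div_mul_div_comm, mul_comm ((n.factorial : ℝ)) ((n:ℝ)+1)]
  have hbound₂ : ∀ n, ∀ u : ℝ, 0 ≤ u → u ≤ t' → ‖F₂ n u‖ ≤ M ^ n * u ^ n / n.factorial := by
    intro n
    induction n with
    | zero => intro u hu hu'; simp [hF₂0]
    | succ n ih =>
      intro u hu hu'
      have key : ∀ s ∈ Set.Icc (0:ℝ) u, ‖F₂ n s * A (s + t)‖ ≤ M ^ (n+1) * s ^ n / n.factorial := by
        intro s hs
        have hs1 : 0 ≤ s := hs.1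
        have hs2 : s ≤ t' := hs.2.trans hu'
        have hst : s + t ∈ Set.Icc (0:ℝ) (t + t') := ⟨by linarith, by linarith⟩
        calc ‖F₂ n s * A (s + t)‖ ≤ ‖F₂ n s‖ * ‖A (s + t)‖ := norm_mul_le _ _
          _ ≤ (M ^ n * s ^ n / n.factorial) * M := by
              apply mul_le_mul (ih s hs1 hs2) (hM _ hst) (norm_nonneg _)
              positivity
          _ = M ^ (n+1) * s ^ n / n.factorial := by ring
      calc ‖F₂ (n+1) u‖ = ‖∫ s in (0:ℝ)..u, F₂ n s * A (s + t)‖ := by rw [hF₂s]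
        _ ≤ ∫ s in (0:ℝ)..u, ‖F₂ n s * A (s + t)‖ :=
            intervalIntegral.norm_integral_le_integral_norm hu
        _ ≤ ∫ s in (0:ℝ)..u, M ^ (n+1) * s ^ n / n.factorial := by
            apply intervalIntegral.integral_mono_on hu
              (((hcont₂ n).mul hA₂).norm.intervalIntegrable 0 u)
              (((continuous_const.mul (continuous_pow n)).div_const
                (n.factorial : ℝ)).intervalIntegrable 0 u)
            exact key
        _ = M ^ (n+1) * u ^ (n+1) / (n+1).factorial := by
            have heq : ∀ r : ℝ, M ^ (n+1) * r ^ n / n.factorial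
                = (M ^ (n+1) / n.factorial) * r ^ n := fun r => by ring
            simp_rw [heq]
            rw [intervalIntegral.integral_const_mul, integral_pow, zero_pow (Nat.succ_ne_zero n)]
            have h1 : ((n:ℝ) + 1) ≠ 0 := by positivity
            have h2 : ((n.factorial : ℝ)) ≠ 0 := by positivity
            rw [Nat.factorial_succ, sub_zero]
            push_cast
            rw [div_mul_div_comm, mul_comm ((n.factorial : ℝ)) ((n:ℝ)+1)]
  -- summability
  have hsum1 : Summable fun n => ‖F n t‖ := by
    apply Summable.of_nonneg_of_le (fun n => norm_nonneg _)
      (fun n => ?_) (Real.summable_pow_div_factorial (M * t))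
    calc ‖F n t‖ ≤ M ^ n * t ^ n / n.factorial := hbound n t ht (by linarith)
      _ = (M * t) ^ n / n.factorial := by rw [mul_pow]
  have hsum2 : Summable fun n => ‖F₂ n t'‖ := by
    apply Summable.of_nonneg_of_le (fun n => norm_nonneg _)
      (fun n => ?_) (Real.summable_pow_div_factorial (M * t'))
    calc ‖F₂ n t'‖ ≤ M ^ n * t' ^ n / n.factorial := hbound₂ n t' ht' le_rfl
      _ = (M * t') ^ n / n.factorial := by rw [mul_pow]
  -- the key convolution identity
  have key : ∀ n : ℕ, ∀ s : ℝ, 0 ≤ s → s ≤ t' →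
      F n (t + s) = ∑ k ∈ Finset.range (n + 1), F k t * F₂ (n - k) s := by
    intro n
    induction n with
    | zero => intro s hs hs'; simp [hF0, hF₂0]
    | succ n ih =>
      intro s hs hs'
      have hsplit : (∫ r in (0:ℝ)..(t + s), F n r * A r)
          = (∫ r in (0:ℝ)..t, F n r * A r) + ∫ r in t..(t + s), F n r * A r :=
        (intervalIntegral.integral_add_adjacent_intervals
          (((hcont n).mul hA).intervalIntegrable 0 t)
          (((hcont n).mul hA).intervalIntegrable t (t + s))).symm
      have hshift : (∫ r in t..(t + s), F n r * A r)
          = ∫ r in (0:ℝ)..s, F n (r + t) * A (r + t) := by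
        rw [intervalIntegral.integral_comp_add_right (fun r => F n r * A r) t, zero_add,
          add_comm s t]
      have hcongr : (∫ r in (0:ℝ)..s, F n (r + t) * A (r + t))
          = ∫ r in (0:ℝ)..s,
              (∑ k ∈ Finset.range (n + 1), F k t * (F₂ (n - k) r * A (r + t))) := by
        apply intervalIntegral.integral_congr
        intro r hr
        rw [Set.uIcc_of_le hs] at hr
        show F n (r + t) * A (r + t) = ∑ k ∈ Finset.range (n + 1), F k t * (F₂ (n - k) r * A (r + t))
        rw [add_comm r t, ih r hr.1 (hr.2.trans hs'), Finset.sum_mul]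
        simp_rw [mul_assoc]
      have hsum_int : (∫ r in (0:ℝ)..s,
            (∑ k ∈ Finset.range (n + 1), F k t * (F₂ (n - k) r * A (r + t))))
          = ∑ k ∈ Finset.range (n + 1), F k t * F₂ (n + 1 - k) s := by
        rw [intervalIntegral.integral_finset_sum]
        · apply Finset.sum_congr rfl
          intro k hk
          have hk' : k ≤ n := Nat.lt_succ_iff.mp (Finset.mem_range.mp hk)
          have hI : IntervalIntegrable (fun r => F₂ (n - k) r * A (r + t)) volume 0 s :=
            ((hcont₂ (n - k)).mul hA₂).intervalIntegrable 0 s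
          have hL := (ContinuousLinearMap.mul ℝ 𝔸 (F k t)).intervalIntegral_comp_comm hI
          simp only [ContinuousLinearMap.mul_apply'] at hL
          rw [hL, ← hF₂s (n - k) s, Nat.succ_sub hk']
        · intro k hk
          exact ((continuous_const.mul ((hcont₂ (n - k)).mul hA₂)).intervalIntegrable 0 s)
      rw [hFs, hsplit, hshift, hcongr, hsum_int, ← hFs n t]
      conv_rhs => rw [Finset.sum_range_succ]
      rw [Nat.sub_self, hF₂0, mul_one, add_comm]
  rw [tsum_mul_tsum_eq_tsum_sum_antidiagonal_of_summable_norm hsum1 hsum2]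
  apply tsum_congr
  intro n
  rw [Finset.Nat.sum_antidiagonal_eq_sum_range_succ_mk, key n t' ht' le_rfl]
end

section
/- Let μ be a measure, q ≥ 1, and Q a nonnegative function lying in L^{4mq}(μ) for all m ≥ 1. For integers 1 ≤ l ≤ n-1: ‖Q‖_{4lq}^l · ‖Q‖_{4(n-l)q}^{n-l} ≤ ‖Q‖_{4q} · ‖Q‖_{4(n-1)q}^{n-1}. -/
open MeasureTheory ENNReal

/-- Hölder interpolation for lintegrals of powers. -/
lemma interp_aux {α : Type*} [MeasurableSpace α] (μ : Measure α)
    (Q : α → ℝ≥0∞) (hQ : Measurable Q) {a b θ : ℝ} (ha : 0 ≤ a) (hb : 0 ≤ b)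
    (hθ : 0 ≤ θ) (hθ1 : θ ≤ 1) :
    ∫⁻ x, Q x ^ (θ * a + (1 - θ) * b) ∂μ ≤
      (∫⁻ x, Q x ^ a ∂μ) ^ θ * (∫⁻ x, Q x ^ b ∂μ) ^ (1 - θ) := by
  have h1θ : 0 ≤ 1 - θ := by linarith
  have := lintegral_mul_norm_pow_le (μ := μ)
    (f := fun x => Q x ^ a) (g := fun x => Q x ^ b)
    ((hQ.pow_const a).aemeasurable) ((hQ.pow_const b).aemeasurable)
    hθ h1θ (by ring)
  refine le_trans (le_of_eq ?_) this
  refine lintegral_congr fun x => ?_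
  rw [ENNReal.rpow_add_of_nonneg _ _ (mul_nonneg hθ ha) (mul_nonneg h1θ hb),
    ← ENNReal.rpow_mul, ← ENNReal.rpow_mul]
  ring_nf

lemma pow_collapse {x : ℝ≥0∞} {q : ℝ} (hq : 0 < q) {m : ℕ} (hm : 1 ≤ m) :
    (x ^ (1 / (4 * (m : ℝ) * q))) ^ m = x ^ (1 / (4 * q)) := by
  have hm0 : (m : ℝ) ≠ 0 := Nat.cast_ne_zero.mpr (by omega)
  rw [← ENNReal.rpow_natCast, ← ENNReal.rpow_mul]
  congr 1
  field_simp

/-- log-convexity bound for `L^p` norms: for `1 ≤ l ≤ n-1`,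
`‖Q‖_{4lq}^l ‖Q‖_{4(n-l)q}^{n-l} ≤ ‖Q‖_{4q} ‖Q‖_{4(n-1)q}^{n-1}`, where
`‖Q‖_s = (∫ Q^s dμ)^{1/s}`. -/
theorem stmt19 {α : Type*} [MeasurableSpace α] (μ : Measure α)
    (Q : α → ℝ≥0∞) (hQ : Measurable Q) (q : ℝ) (hq : 1 ≤ q)
    (hLp : ∀ m : ℕ, 1 ≤ m → ∫⁻ x, Q x ^ (4 * (m : ℝ) * q) ∂μ ≠ ⊤)
    (n l : ℕ) (hn : 2 ≤ n) (hl : 1 ≤ l) (hln : l ≤ n - 1) :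
    ((∫⁻ x, Q x ^ (4 * (l : ℝ) * q) ∂μ) ^ (1 / (4 * (l : ℝ) * q))) ^ l *
      ((∫⁻ x, Q x ^ (4 * ((n : ℝ) - l) * q) ∂μ) ^ (1 / (4 * ((n : ℝ) - l) * q))) ^ (n - l) ≤
    (∫⁻ x, Q x ^ (4 * q) ∂μ) ^ (1 / (4 * q)) *
      ((∫⁻ x, Q x ^ (4 * ((n : ℝ) - 1) * q) ∂μ) ^ (1 / (4 * ((n : ℝ) - 1) * q))) ^ (n - 1) := by
  have hq0 : 0 < q := by linarith
  have hlnn : l ≤ n := le_trans hln (Nat.sub_le n 1)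
  have hnl : ((n - l : ℕ) : ℝ) = (n : ℝ) - l := by
    push_cast [Nat.cast_sub hlnn]; ring
  have hn1 : ((n - 1 : ℕ) : ℝ) = (n : ℝ) - 1 := by
    push_cast [Nat.cast_sub (by omega : 1 ≤ n)]; ring
  -- collapse the outer powers
  rw [pow_collapse hq0 hl, ← hnl, pow_collapse hq0 (by omega), ← hn1,
    pow_collapse hq0 (by omega)]
  have h4q : (4 : ℝ) * q = 4 * ((1 : ℕ) : ℝ) * q := by norm_num
  -- core inequality on integrals
  have key : (∫⁻ x, Q x ^ (4 * (l : ℝ) * q) ∂μ) *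
      (∫⁻ x, Q x ^ (4 * ((n - l : ℕ) : ℝ) * q) ∂μ) ≤
      (∫⁻ x, Q x ^ (4 * q) ∂μ) * (∫⁻ x, Q x ^ (4 * ((n - 1 : ℕ) : ℝ) * q) ∂μ) := by
    rcases eq_or_lt_of_le hn with h2 | h3
    · -- n = 2 : l = 1, n - l = 1
      have hl1 : l = 1 := by omega
      subst hl1
      have : n - 1 = 1 := by omega
      rw [← h2] at *
      norm_num
    · -- n ≥ 3
      have hn3 : 3 ≤ n := h3
      set θ : ℝ := ((n : ℝ) - 1 - l) / ((n : ℝ) - 2) with hθdef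
      have hn2 : (0 : ℝ) < (n : ℝ) - 2 := by
        have : (3 : ℝ) ≤ (n : ℝ) := by exact_mod_cast hn3
        linarith
      have hlr : (1 : ℝ) ≤ (l : ℝ) := by exact_mod_cast hl
      have hlnr : (l : ℝ) ≤ (n : ℝ) - 1 := by
        have : (l : ℝ) ≤ ((n - 1 : ℕ) : ℝ) := by exact_mod_cast hln
        rwa [hn1] at this
      have hθ0 : 0 ≤ θ := div_nonneg (by linarith) hn2.le
      have hθ1 : θ ≤ 1 := by
        rw [div_le_one hn2]; linarith
      have h1θ0 : 0 ≤ 1 - θ := by linarith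
      have ha : (0 : ℝ) ≤ 4 * q := by linarith
      have hb : (0 : ℝ) ≤ 4 * ((n : ℝ) - 1) * q := by nlinarith
      have e1 : θ * (4 * q) + (1 - θ) * (4 * ((n : ℝ) - 1) * q) = 4 * (l : ℝ) * q := by
        have : θ * ((n : ℝ) - 2) = (n : ℝ) - 1 - l := by
          rw [hθdef]; field_simp
        nlinarith [this]
      have e2 : (1 - θ) * (4 * q) + θ * (4 * ((n : ℝ) - 1) * q) = 4 * ((n : ℝ) - l) * q := by
        have : θ * ((n : ℝ) - 2) = (n : ℝ) - 1 - l := by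
          rw [hθdef]; field_simp
        nlinarith [this]
      have I1 := interp_aux μ Q hQ (a := 4 * q) (b := 4 * ((n : ℝ) - 1) * q) ha hb hθ0 hθ1
      have I2 := interp_aux μ Q hQ (a := 4 * q) (b := 4 * ((n : ℝ) - 1) * q) ha hb h1θ0
        (by linarith)
      rw [e1] at I1
      have h1θθ : 1 - (1 - θ) = θ := by ring
      rw [h1θθ] at I2
      rw [e2] at I2
      rw [hnl, hn1]
      calc (∫⁻ x, Q x ^ (4 * (l : ℝ) * q) ∂μ) * (∫⁻ x, Q x ^ (4 * ((n : ℝ) - l) * q) ∂μ)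
          ≤ ((∫⁻ x, Q x ^ (4 * q) ∂μ) ^ θ * (∫⁻ x, Q x ^ (4 * ((n : ℝ) - 1) * q) ∂μ) ^ (1 - θ)) *
            ((∫⁻ x, Q x ^ (4 * q) ∂μ) ^ (1 - θ) *
              (∫⁻ x, Q x ^ (4 * ((n : ℝ) - 1) * q) ∂μ) ^ θ) := mul_le_mul' I1 I2
        _ = ((∫⁻ x, Q x ^ (4 * q) ∂μ) ^ θ * (∫⁻ x, Q x ^ (4 * q) ∂μ) ^ (1 - θ)) *
            ((∫⁻ x, Q x ^ (4 * ((n : ℝ) - 1) * q) ∂μ) ^ (1 - θ) *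
              (∫⁻ x, Q x ^ (4 * ((n : ℝ) - 1) * q) ∂μ) ^ θ) := by ring
        _ = (∫⁻ x, Q x ^ (4 * q) ∂μ) * (∫⁻ x, Q x ^ (4 * ((n : ℝ) - 1) * q) ∂μ) := by
            rw [← ENNReal.rpow_add_of_nonneg _ _ hθ0 h1θ0,
              ← ENNReal.rpow_add_of_nonneg _ _ h1θ0 hθ0]
            norm_num
  -- lift to power 1/(4q)
  have h14q : (0 : ℝ) ≤ 1 / (4 * q) := by positivity
  calc (∫⁻ x, Q x ^ (4 * (l : ℝ) * q) ∂μ) ^ (1 / (4 * q)) *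
        (∫⁻ x, Q x ^ (4 * ((n - l : ℕ) : ℝ) * q) ∂μ) ^ (1 / (4 * q))
      = ((∫⁻ x, Q x ^ (4 * (l : ℝ) * q) ∂μ) *
          (∫⁻ x, Q x ^ (4 * ((n - l : ℕ) : ℝ) * q) ∂μ)) ^ (1 / (4 * q)) := by
        rw [ENNReal.mul_rpow_of_nonneg _ _ h14q]
    _ ≤ ((∫⁻ x, Q x ^ (4 * q) ∂μ) * (∫⁻ x, Q x ^ (4 * ((n - 1 : ℕ) : ℝ) * q) ∂μ)) ^
          (1 / (4 * q)) := ENNReal.rpow_le_rpow key h14q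
    _ = (∫⁻ x, Q x ^ (4 * q) ∂μ) ^ (1 / (4 * q)) *
          (∫⁻ x, Q x ^ (4 * ((n - 1 : ℕ) : ℝ) * q) ∂μ) ^ (1 / (4 * q)) := by
        rw [ENNReal.mul_rpow_of_nonneg _ _ h14q]
end
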